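/- Let π be a finitely generated group. If the representation variety R(π) = Hom(π, SL(2,ℂ)) has Krull dimension 0, then every representation ρ : π → SL(2,ℂ) is reducible (i.e., R(π) contains no irreducible representation). -/

import Mathlib

/-- A subset of `σ → ℂ` is an affine algebraic variety if it is the zero locus of an ideal of
polynomials. -/
def IsAffineVariety {σ : Type} (s : Set (σ → ℂ)) : Prop :=
  ∃ I : Ideal (MvPolynomial σ ℂ), s = MvPolynomial.zeroLocus ℂ I

/-- An affine variety is irreducible if it is nonempty and is not the union of two strictly
smaller subvarieties. -/
def IsIrredVariety {σ : Type} (s : Set (σ → ℂ)) : Prop :=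
  IsAffineVariety s ∧ s.Nonempty ∧
    ∀ t u : Set (σ → ℂ), IsAffineVariety t → IsAffineVariety u →
      s = t ∪ u → s = t ∨ s = u

/-- The Krull dimension of a set `V ⊆ ℂ^σ`: the supremum of lengths of strictly increasing
chains of irreducible closed subvarieties contained in `V`. -/
noncomputable def varietyDim {σ : Type} (V : Set (σ → ℂ)) : WithBot ℕ∞ :=
  Order.krullDim {s : Set (σ → ℂ) // IsIrredVariety s ∧ s ⊆ V}

/-- A representation `ρ : π → SL(2,ℂ)` is irreducible if its image preserves no
one-dimensional subspace of `ℂ²`. -/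
def IsIrrRep {π : Type*} [Group π] (ρ : π →* Matrix.SpecialLinearGroup (Fin 2) ℂ) : Prop :=
  ¬ ∃ L : Submodule ℂ (Fin 2 → ℂ), Module.finrank ℂ L = 1 ∧
      ∀ γ : π, L.map (Matrix.mulVecLin (ρ γ : Matrix (Fin 2) (Fin 2) ℂ)) = L

/-- The coordinates of a representation in `ℂ^{4n}` given by the matrix entries of the images
of a chosen tuple of generators. -/
def repCoords {π : Type*} [Group π] {n : ℕ} (g : Fin n → π)
    (ρ : π →* Matrix.SpecialLinearGroup (Fin 2) ℂ) : Fin n × Fin 2 × Fin 2 → ℂ :=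
  fun p => (ρ (g p.1) : Matrix (Fin 2) (Fin 2) ℂ) p.2.1 p.2.2

/-! ### Auxiliary lemmas -/

open MvPolynomial Polynomial in
lemma mem_zl_span {σ : Type} {S : Set (MvPolynomial σ ℂ)} {x : σ → ℂ}
    (h : ∀ f ∈ S, MvPolynomial.eval x f = 0) : x ∈ zeroLocus ℂ (Ideal.span S) := by
  intro f hf
  have : Ideal.span S ≤ RingHom.ker (MvPolynomial.eval x) := Ideal.span_le.2 h
  exact this hf

open MvPolynomial in
lemma singleton_isIrredVariety {σ : Type} (p : σ → ℂ) : IsIrredVariety {p} := by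
  refine ⟨⟨Ideal.span (Set.range (fun j => X j - C (p j))), ?_⟩, ⟨p, rfl⟩, ?_⟩
  · ext x
    simp only [Set.mem_singleton_iff]
    constructor
    · rintro rfl
      exact mem_zl_span (by rintro f ⟨j, rfl⟩; simp)
    · intro hx
      funext j
      have := hx _ (Ideal.subset_span ⟨j, rfl⟩)
      simpa [sub_eq_zero] using this
  · intro t u _ _ heq
    have hp : p ∈ t ∪ u := heq ▸ rfl
    rcases hp with hp | hp
    · left
      refine Set.Subset.antisymm (Set.singleton_subset_iff.2 hp) ?_
      intro x hx
      have : x ∈ t ∪ u := Set.mem_union_left _ hx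
      rw [← heq] at this
      exact this
    · right
      refine Set.Subset.antisymm (Set.singleton_subset_iff.2 hp) ?_
      intro x hx
      have : x ∈ t ∪ u := Set.mem_union_right _ hx
      rw [← heq] at this
      exact this

lemma one_le_krullDim_of_lt {α : Type*} [Preorder α] {a b : α} (h : a < b) :
    1 ≤ Order.krullDim α := by
  have := Order.LTSeries.length_le_krullDim (α := α)
    ⟨1, ![a, b], by intro i; fin_cases i; simpa using h⟩
  simpa using this

open MvPolynomial Polynomial in
lemma eval_comp_point {σ : Type} (p : σ → Polynomial ℂ) (f : MvPolynomial σ ℂ) (s : ℂ) :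
    Polynomial.eval s (MvPolynomial.eval₂ Polynomial.C p f)
      = MvPolynomial.eval (fun j => (p j).eval s) f := by
  rw [show Polynomial.eval s (MvPolynomial.eval₂ Polynomial.C p f)
      = Polynomial.evalRingHom s (MvPolynomial.eval₂ Polynomial.C p f) from rfl,
    MvPolynomial.eval₂_comp_left (Polynomial.evalRingHom s) Polynomial.C p f]
  have h : (Polynomial.evalRingHom s).comp Polynomial.C = RingHom.id ℂ := by ext a; simp
  rw [h]
  rfl

open MvPolynomial Polynomial in
lemma eval_point_comp {σ : Type} (q : MvPolynomial σ ℂ) (f : Polynomial ℂ) (x : σ → ℂ) :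
    MvPolynomial.eval x (Polynomial.eval₂ MvPolynomial.C q f)
      = Polynomial.eval (MvPolynomial.eval x q) f := by
  rw [show MvPolynomial.eval x (Polynomial.eval₂ MvPolynomial.C q f)
      = (MvPolynomial.eval x : MvPolynomial σ ℂ →+* ℂ) (Polynomial.eval₂ MvPolynomial.C q f)
      from rfl,
    Polynomial.hom_eval₂ f MvPolynomial.C (MvPolynomial.eval x) q]
  have h : (MvPolynomial.eval x : MvPolynomial σ ℂ →+* ℂ).comp MvPolynomial.C = RingHom.id ℂ := by
    ext a; simp
  rw [h]
  rfl

open MvPolynomial Polynomial in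
lemma curve_irred {σ : Type} (p : σ → Polynomial ℂ) (q : MvPolynomial σ ℂ)
    (hq : ∀ s : ℂ, MvPolynomial.eval (fun j => (p j).eval s) q = s) :
    IsIrredVariety (Set.range (fun s : ℂ => fun j => (p j).eval s)) := by
  set φ : ℂ → (σ → ℂ) := fun s j => (p j).eval s with hφ
  refine ⟨?_, ⟨φ 0, 0, rfl⟩, ?_⟩
  · refine ⟨Ideal.span (Set.range (fun j => X j - Polynomial.eval₂ MvPolynomial.C q (p j))), ?_⟩
    ext x
    constructor
    · rintro ⟨s, rfl⟩
      apply mem_zl_span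
      rintro f ⟨j, rfl⟩
      simp only [map_sub, MvPolynomial.eval_X, eval_point_comp, hq s]
      simp [φ, hq]
    · intro hx
      refine ⟨MvPolynomial.eval x q, ?_⟩
      funext j
      have h2 := hx _ (Ideal.subset_span ⟨j, rfl⟩)
      rw [MvPolynomial.aeval_eq_eval] at h2
      simp only [map_sub, MvPolynomial.eval_X, eval_point_comp] at h2
      simpa [φ] using (sub_eq_zero.mp h2).symm
  · rintro t u ⟨I, rfl⟩ ⟨J, rfl⟩ heq
    have hcover : ∀ s : ℂ, φ s ∈ zeroLocus ℂ I ∪ zeroLocus ℂ J := by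
      intro s; rw [← heq]; exact ⟨s, rfl⟩
    have key : (∀ f ∈ I, MvPolynomial.eval₂ Polynomial.C p f = 0) ∨
        (∀ f ∈ J, MvPolynomial.eval₂ Polynomial.C p f = 0) := by
      by_contra hc
      push_neg at hc
      obtain ⟨⟨f, hfI, hf0⟩, ⟨e, heJ, he0⟩⟩ := hc
      have hfin : ({s : ℂ | φ s ∈ zeroLocus ℂ I} ∪ {s : ℂ | φ s ∈ zeroLocus ℂ J}).Finite := by
        apply Set.Finite.union
        · apply (Polynomial.finite_setOf_isRoot hf0).subset
          intro s hs
          have := hs f hfI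
          rw [MvPolynomial.aeval_eq_eval] at this
          rw [← eval_comp_point] at this
          exact this
        · apply (Polynomial.finite_setOf_isRoot he0).subset
          intro s hs
          have := hs e heJ
          rw [MvPolynomial.aeval_eq_eval] at this
          rw [← eval_comp_point] at this
          exact this
      have hsub : (Set.univ : Set ℂ) ⊆
          {s : ℂ | φ s ∈ zeroLocus ℂ I} ∪ {s : ℂ | φ s ∈ zeroLocus ℂ J} := fun s _ => hcover s
      exact Set.infinite_univ (hfin.subset hsub)
    rcases key with h | h
    · left
      apply Set.Subset.antisymm ?_ (heq ▸ Set.subset_union_left)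
      rintro x ⟨s, rfl⟩
      intro f hf
      rw [MvPolynomial.aeval_eq_eval]
      rw [show MvPolynomial.eval (φ s) f = Polynomial.eval s (MvPolynomial.eval₂ Polynomial.C p f)
        from (eval_comp_point p f s).symm, h f hf]
      simp
    · right
      apply Set.Subset.antisymm ?_ (heq ▸ Set.subset_union_right)
      rintro x ⟨s, rfl⟩
      intro f hf
      rw [MvPolynomial.aeval_eq_eval]
      rw [show MvPolynomial.eval (φ s) f = Polynomial.eval s (MvPolynomial.eval₂ Polynomial.C p f)
        from (eval_comp_point p f s).symm, h f hf]
      simp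

lemma reducible_of_lower_left_zero {π : Type*} [Group π] {n : ℕ} (g : Fin n → π)
    (hg : Subgroup.closure (Set.range g) = ⊤)
    (ρ : π →* Matrix.SpecialLinearGroup (Fin 2) ℂ)
    (h : ∀ i, (ρ (g i) : Matrix (Fin 2) (Fin 2) ℂ) 1 0 = 0) :
    ¬ IsIrrRep ρ := by
  intro hirr
  apply hirr
  set v : Fin 2 → ℂ := Pi.single 0 1 with hv
  have hvne : v ≠ 0 := by
    intro hc
    have := congrFun hc 0
    simp [hv, Pi.single_eq_same] at this
  refine ⟨ℂ ∙ v, finrank_span_singleton hvne, ?_⟩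
  intro γ
  have hγ : γ ∈ Subgroup.closure (Set.range g) := hg ▸ Subgroup.mem_top γ
  induction hγ using Subgroup.closure_induction with
  | mem x hx =>
    obtain ⟨i, rfl⟩ := hx
    set M : Matrix (Fin 2) (Fin 2) ℂ := (ρ (g i) : Matrix (Fin 2) (Fin 2) ℂ) with hM
    have hdet : M.det = 1 := (ρ (g i)).2
    have hc : M 1 0 = 0 := h i
    have ha : M 0 0 ≠ 0 := by
      intro ha
      rw [Matrix.det_fin_two, hc, ha] at hdet
      simp at hdet
    rw [Submodule.map_span]
    rw [Set.image_singleton]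
    have himg : M.mulVecLin v = M 0 0 • v := by
      funext k
      fin_cases k <;>
        simp [Matrix.mulVecLin, hv, Matrix.mulVec_single, hc, Pi.single_eq_same]
    rw [himg]
    exact Submodule.span_singleton_smul_eq (isUnit_iff_ne_zero.mpr ha) v
  | one => simp
  | mul x y _ _ hx hy =>
    have : ((ρ (x * y) : Matrix (Fin 2) (Fin 2) ℂ)) =
        (ρ x : Matrix (Fin 2) (Fin 2) ℂ) * (ρ y : Matrix (Fin 2) (Fin 2) ℂ) := by
      simp [map_mul]
    rw [this, Matrix.mulVecLin_mul, Submodule.map_comp, hy, hx]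
  | inv x _ hx =>
    have hcomp : (Matrix.mulVecLin ((ρ x⁻¹ : Matrix (Fin 2) (Fin 2) ℂ))).comp
        (Matrix.mulVecLin ((ρ x : Matrix (Fin 2) (Fin 2) ℂ))) = LinearMap.id := by
      rw [← Matrix.mulVecLin_mul]
      have : (ρ x⁻¹ : Matrix (Fin 2) (Fin 2) ℂ) * (ρ x : Matrix (Fin 2) (Fin 2) ℂ) = 1 := by
        rw [← Matrix.SpecialLinearGroup.coe_mul, ← map_mul]
        simp
      rw [this, Matrix.mulVecLin_one]
    conv_lhs => rw [← hx]
    rw [← Submodule.map_comp, hcomp, Submodule.map_id]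

/-- The unipotent matrix `[[1, s], [0, 1]]` as an element of `SL(2,ℂ)`. -/
def usl (s : ℂ) : Matrix.SpecialLinearGroup (Fin 2) ℂ :=
  ⟨!![1, s; 0, 1], by simp [Matrix.det_fin_two_of]⟩

lemma usl_inv_coe (s : ℂ) :
    (((usl s)⁻¹ : Matrix.SpecialLinearGroup (Fin 2) ℂ) : Matrix (Fin 2) (Fin 2) ℂ)
      = !![1, -s; 0, 1] := by
  rw [Matrix.SpecialLinearGroup.coe_inv]
  show (!![1, s; 0, 1] : Matrix (Fin 2) (Fin 2) ℂ).adjugate = _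
  rw [Matrix.adjugate_fin_two_of]
  norm_num

/-- If the `SL(2,ℂ)`-representation variety of a finitely generated group `π` (embedded in
`ℂ^{4n}` via a generating `n`-tuple) has Krull dimension `0`, then every representation
`π → SL(2,ℂ)` is reducible. -/
theorem stmt12 {π : Type*} [Group π] {n : ℕ} (g : Fin n → π)
    (hg : Subgroup.closure (Set.range g) = ⊤)
    (hdim : varietyDim (Set.range (repCoords g)) = 0) :
    ∀ ρ : π →* Matrix.SpecialLinearGroup (Fin 2) ℂ, ¬ IsIrrRep ρ := by
  intro ρ hirr
  -- find a generator with nonzero lower-left entry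
  have hex : ∃ i, (ρ (g i) : Matrix (Fin 2) (Fin 2) ℂ) 1 0 ≠ 0 := by
    by_contra hall
    push_neg at hall
    exact reducible_of_lower_left_zero g hg ρ hall hirr
  obtain ⟨i0, hc0⟩ := hex
  set A : Fin n → Matrix (Fin 2) (Fin 2) ℂ := fun i => (ρ (g i) : Matrix (Fin 2) (Fin 2) ℂ)
    with hA
  -- the curve of conjugated representations
  set p : (Fin n × Fin 2 × Fin 2) → Polynomial ℂ := fun j =>
    !![Polynomial.C (A j.1 0 0) + Polynomial.X * Polynomial.C (A j.1 1 0),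
       Polynomial.C (A j.1 0 1) + Polynomial.X * (Polynomial.C (A j.1 1 1)
         - Polynomial.C (A j.1 0 0)) - Polynomial.X ^ 2 * Polynomial.C (A j.1 1 0);
       Polynomial.C (A j.1 1 0),
       Polynomial.C (A j.1 1 1) - Polynomial.X * Polynomial.C (A j.1 1 0)] j.2.1 j.2.2 with hp
  set φ : ℂ → (Fin n × Fin 2 × Fin 2 → ℂ) := fun s j => (p j).eval s with hφ
  -- the conjugated representations
  have hkey : ∀ s : ℂ, φ s = repCoords g ((MulAut.conj (usl s)).toMonoidHom.comp ρ) := by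
    intro s
    funext j
    obtain ⟨i, k, l⟩ := j
    show (p (i, k, l)).eval s
      = ((usl s * ρ (g i) * (usl s)⁻¹ : Matrix.SpecialLinearGroup (Fin 2) ℂ)
          : Matrix (Fin 2) (Fin 2) ℂ) k l
    rw [Matrix.SpecialLinearGroup.coe_mul, Matrix.SpecialLinearGroup.coe_mul, usl_inv_coe]
    show (p (i, k, l)).eval s = (!![1, s; 0, 1] * A i * !![1, -s; 0, 1]) k l
    fin_cases k <;> fin_cases l <;>
      simp [hp, Matrix.mul_apply, Matrix.vecMul, dotProduct, Fin.sum_univ_two] <;> ring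
  have hsub : Set.range φ ⊆ Set.range (repCoords g) := by
    rintro x ⟨s, rfl⟩
    exact ⟨(MulAut.conj (usl s)).toMonoidHom.comp ρ, (hkey s).symm⟩
  have hzero : φ 0 = repCoords g ρ := by
    rw [hkey 0]
    have : usl 0 = 1 := by
      apply Subtype.ext
      show (!![1, (0:ℂ); 0, 1]) = (1 : Matrix (Fin 2) (Fin 2) ℂ)
      rw [Matrix.one_fin_two]
    funext j
    show ((MulAut.conj (usl 0)).toMonoidHom.comp ρ) (g j.1) _ _ = _
    rw [this]
    simp [repCoords]
  -- retraction
  have hq : ∀ s : ℂ, MvPolynomial.eval (fun j => (p j).eval s)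
      ((MvPolynomial.X (i0, 0, 0) - MvPolynomial.C (A i0 0 0)) * MvPolynomial.C ((A i0 1 0)⁻¹))
        = s := by
    intro s
    have : (p (i0, 0, 0)).eval s = A i0 0 0 + s * A i0 1 0 := by
      simp [hp]
      ring
    simp only [map_mul, map_sub, MvPolynomial.eval_X, MvPolynomial.eval_C, this]
    rw [add_sub_cancel_left, mul_assoc, mul_inv_cancel₀ (show A i0 1 0 ≠ 0 from hc0), mul_one]
  have hcurve := curve_irred p _ hq
  -- strictness
  have hne : φ 1 ≠ φ 0 := by
    intro hcontra
    have := congrFun hcontra (i0, 0, 0)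
    simp [hφ, hp] at this
    exact hc0 this
  -- build the chain
  have h0irr := singleton_isIrredVariety (φ 0)
  have h0sub : ({φ 0} : Set (Fin n × Fin 2 × Fin 2 → ℂ)) ⊆ Set.range (repCoords g) :=
    Set.singleton_subset_iff.2 (hsub ⟨0, rfl⟩)
  set α := {s : Set (Fin n × Fin 2 × Fin 2 → ℂ) // IsIrredVariety s ∧ s ⊆
    Set.range (repCoords g)}
  have hlt : (⟨{φ 0}, h0irr, h0sub⟩ : α) < ⟨Set.range φ, hcurve, hsub⟩ := by
    rw [Subtype.mk_lt_mk]
    constructor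
    · exact Set.singleton_subset_iff.2 ⟨0, rfl⟩
    · intro hle
      exact hne (hle ⟨1, rfl⟩)
  have h1 : (1 : WithBot ℕ∞) ≤ varietyDim (Set.range (repCoords g)) :=
    one_le_krullDim_of_lt hlt
  rw [hdim] at h1
  norm_num at h1
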